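/- arXiv:math/0606528 — 2 statements merged into one kernel-verified Lean document; each statement's English description precedes it below -/
import Mathlib

section
/- Let V be a Hausdorff space, T ⊂ V a compact subspace, W a pointed space, and a: V → W, b: V/T → W, c: T → W maps with b ∘ pr = a and c = a|_T (so c is constant). Let j: F(c) → F(a) and l: F(a) → F(b) be the maps of homotopy fibers induced by the inclusion T → V and projection V → V/T respectively. Let (Y, X) be a pair of pointed spaces with X ⊂ Y, and s: F(a) → X, t: F(b) → Y maps such that in ∘ s and t ∘ l are homotopic rel j(F(c)), where in: X → Y is the inclusion. Then there exists a unique map r: F(b) → X with r ∘ l = s, and in ∘ r is homotopic to t rel the fiber p(b)^{-1}(q_0) over the basepoint q_0 of V/T. -/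
open scoped unitInterval Topology
open ContinuousMap
open Topology
open scoped Classical
noncomputable section

/-- The based path space `PW` of paths starting at the basepoint. -/
def PathSp (W : Type) [TopologicalSpace W] (w0 : W) : Type := {v : C(I, W) // v 0 = w0}

instance (W : Type) [TopologicalSpace W] (w0 : W) : TopologicalSpace (PathSp W w0) :=
  instTopologicalSpaceSubtype

/-- The homotopy fibre `F(g) = {(x, v) ∈ V × PW ∣ g x = v 1}` of a map `g : V → W`. -/
def HFiber {V : Type} (W : Type) [TopologicalSpace V] [TopologicalSpace W] (w0 : W)
    (g : C(V, W)) : Type :=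
  {p : V × PathSp W w0 // g p.1 = p.2.1 1}

instance {V : Type} (W : Type) [TopologicalSpace V] [TopologicalSpace W] (w0 : W)
    (g : C(V, W)) : TopologicalSpace (HFiber W w0 g) := instTopologicalSpaceSubtype

/-- The fibration `p(g) : F(g) → V`. -/
def hfProj {V W : Type} [TopologicalSpace V] [TopologicalSpace W] (w0 : W) (g : C(V, W)) :
    C(HFiber W w0 g, V) :=
  ⟨fun p => p.1.1, (continuous_fst.comp continuous_subtype_val)⟩

/-- The map of homotopy fibres induced by a map `φ` with `g' ∘ φ = g`. -/
def hfMap {V V' W : Type} [TopologicalSpace V] [TopologicalSpace V'] [TopologicalSpace W]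
    {w0 : W} {g : C(V, W)} {g' : C(V', W)} (φ : C(V, V')) (hφ : ∀ x, g' (φ x) = g x) :
    C(HFiber W w0 g, HFiber W w0 g') :=
  ⟨fun p => ⟨(φ p.1.1, p.1.2), by rw [hφ]; exact p.2⟩, by
    apply Continuous.subtype_mk
    exact (φ.continuous.comp (continuous_fst.comp continuous_subtype_val)).prodMk
      (continuous_snd.comp continuous_subtype_val)⟩

/-- The quotient `V/T` collapsing `T` to a point. -/
def QuotBy {V : Type} (T : Set V) : Type := Quot (fun x y => x ∈ T ∧ y ∈ T)

instance {V : Type} [TopologicalSpace V] (T : Set V) : TopologicalSpace (QuotBy T) :=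
  instTopologicalSpaceQuot

/-- The projection `V → V/T`. -/
def quotByProj {V : Type} [TopologicalSpace V] (T : Set V) : C(V, QuotBy T) :=
  ⟨Quot.mk _, continuous_quot_mk⟩

/-- Lemma 2.7: for `V` Hausdorff, `T ⊆ V` compact, `a : V → W` constant on
`T`, `b : V/T → W` with `b ∘ pr = a`, `c = a|_T`, and maps `s : F(a) → X`, `t : F(b) → Y`
(`X ⊆ Y`) with `in ∘ s ≃ t ∘ l` rel `j(F(c))`, there is a unique `r : F(b) → X` with
`r ∘ l = s`; moreover `in ∘ r ≃ t` rel the fibre over the basepoint of `V/T`. -/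
theorem hfiber_quotient_factorization
    (V : Type) [TopologicalSpace V] [T2Space V] (T : Set V) (hT : IsCompact T)
    (t0 : V) (ht0 : t0 ∈ T)
    (W : Type) [TopologicalSpace W] (w0 : W)
    (a : C(V, W)) (ha : ∀ x ∈ T, a x = w0)
    (b : C(QuotBy T, W)) (hb : ∀ x : V, b (quotByProj T x) = a x)
    (Y : Type) [TopologicalSpace Y] (X : Set Y) (y0 : Y) (hy0 : y0 ∈ X)
    (s : C(HFiber W w0 a, X)) (t : C(HFiber W w0 (b : C(QuotBy T, W)), Y))
    (hst :
      ContinuousMap.HomotopicRel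
        ((⟨Subtype.val, continuous_subtype_val⟩ : C(X, Y)).comp s)
        (t.comp (hfMap (quotByProj T) hb))
        (Set.range
          (hfMap (w0 := w0) (g := ContinuousMap.const T w0)
            (⟨Subtype.val, continuous_subtype_val⟩ : C(T, V))
            (fun x => ha x x.2)))) :
    ∃ r : C(HFiber W w0 (b : C(QuotBy T, W)), X),
      (r.comp (hfMap (quotByProj T) hb) = s ∧
        ContinuousMap.HomotopicRel
          ((⟨Subtype.val, continuous_subtype_val⟩ : C(X, Y)).comp r) t
          {p : HFiber W w0 (b : C(QuotBy T, W)) | p.1.1 = quotByProj T t0}) ∧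
      ∀ r' : C(HFiber W w0 (b : C(QuotBy T, W)), X),
        r'.comp (hfMap (quotByProj T) hb) = s → r' = r := by
  classical
  -- Notation
  set rel : V → V → Prop := fun x y => x ∈ T ∧ y ∈ T with hrel
  have hTc : IsClosed T := hT.isClosed
  -- equality in the quotient
  have quoteq : ∀ x y : V, Quot.mk rel x = Quot.mk rel y ↔ (x = y ∨ (x ∈ T ∧ y ∈ T)) := by
    intro x y
    constructor
    · intro h
      have h' := Quot.eq.mp h
      clear h
      induction h' with
      | rel _ _ h => exact Or.inr h
      | refl _ => exact Or.inl rfl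
      | symm a b _ ih =>
        rcases ih with rfl | ⟨h1, h2⟩
        · exact Or.inl rfl
        · exact Or.inr ⟨h2, h1⟩
      | trans a b c _ _ ih1 ih2 =>
        rcases ih1 with rfl | ⟨h1, h2⟩
        · exact ih2
        · rcases ih2 with rfl | ⟨h3, h4⟩
          · exact Or.inr ⟨h1, h2⟩
          · exact Or.inr ⟨h1, h4⟩
    · rintro (rfl | ⟨h1, h2⟩)
      · rfl
      · exact Quot.sound ⟨h1, h2⟩
  -- the projection is a closed map
  have hclosed : IsClosedMap (Quot.mk rel) := by
    intro C hC
    rw [← isQuotientMap_quot_mk.isClosed_preimage]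
    have hpre : Quot.mk rel ⁻¹' (Quot.mk rel '' C) =
        if (C ∩ T).Nonempty then C ∪ T else C := by
      ext x
      simp only [Set.mem_preimage, Set.mem_image]
      constructor
      · rintro ⟨y, hy, hxy⟩
        rcases (quoteq y x).mp hxy with rfl | ⟨h1, h2⟩
        · split <;> simp [hy]
        · rw [if_pos ⟨y, hy, h1⟩]
          exact Or.inr h2
      · intro hx
        split_ifs at hx with hne
        · rcases hx with hx | hx
          · exact ⟨x, hx, rfl⟩
          · obtain ⟨y, hyC, hyT⟩ := hne
            exact ⟨y, hyC, (quoteq y x).mpr (Or.inr ⟨hyT, hx⟩)⟩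
        · exact ⟨x, hx, rfl⟩
    rw [hpre]
    split_ifs
    · exact hC.union hTc
    · exact hC
  -- fibers are compact
  have hfibers : ∀ q, IsCompact (Quot.mk rel ⁻¹' {q}) := by
    intro q
    obtain ⟨x, rfl⟩ := Quot.mk_surjective (r := rel) q
    by_cases hx : x ∈ T
    · have : Quot.mk rel ⁻¹' {Quot.mk rel x} = insert x T := by
        ext y
        simp only [Set.mem_preimage, Set.mem_singleton_iff, Set.mem_insert_iff]
        rw [quoteq]
        constructor
        · rintro (rfl | ⟨h1, _⟩)
          · exact Or.inl rfl
          · exact Or.inr h1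
        · rintro (rfl | h)
          · exact Or.inl rfl
          · exact Or.inr ⟨h, hx⟩
      rw [this]
      exact hT.insert x
    · have : Quot.mk rel ⁻¹' {Quot.mk rel x} = {x} := by
        ext y
        simp only [Set.mem_preimage, Set.mem_singleton_iff]
        rw [quoteq]
        constructor
        · rintro (rfl | ⟨_, h2⟩)
          · rfl
          · exact absurd h2 hx
        · rintro rfl; exact Or.inl rfl
      rw [this]
      exact isCompact_singleton
  have hproper : IsProperMap (Quot.mk rel) :=
    isProperMap_iff_isClosedMap_and_compact_fibers.mpr ⟨continuous_quot_mk, hclosed, hfibers⟩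
  -- the product map with the identity on the path space
  set f : V × PathSp W w0 → QuotBy T × PathSp W w0 :=
    Prod.map (Quot.mk rel) id with hf
  have hfproper : IsProperMap f := hproper.prodMap isProperMap_id
  have hfsurj : Function.Surjective f := by
    rintro ⟨ξ, v⟩
    obtain ⟨x, rfl⟩ := Quot.mk_surjective (r := rel) ξ
    exact ⟨(x, v), rfl⟩
  -- the restriction to the homotopy fibres is a quotient map
  set B : Set (QuotBy T × PathSp W w0) := {p | b p.1 = p.2.1 1} with hB
  have hg : IsQuotientMap (B.restrictPreimage f) :=
    (hfproper.isClosedMap.restrictPreimage B).isQuotientMap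
      (hfproper.continuous.restrictPreimage) (B.restrictPreimage_surjective hfsurj)
  set l : C(HFiber W w0 a, HFiber W w0 (b : C(QuotBy T, W))) := hfMap (quotByProj T) hb with hldef
  -- identify `l` with the restriction of `f`
  have hmem : ∀ p : HFiber W w0 a, p.1 ∈ f ⁻¹' B := by
    intro p
    show b (Quot.mk rel p.1.1) = p.1.2.1 1
    exact (hb p.1.1).trans p.2
  have e_cont : Continuous (fun p : HFiber W w0 a => (⟨p.1, hmem p⟩ : ↥(f ⁻¹' B))) :=
    continuous_subtype_val.subtype_mk _
  have e2_cont : Continuous (fun q : ↥B => (⟨q.1, q.2⟩ : HFiber W w0 (b : C(QuotBy T, W)))) :=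
    continuous_subtype_val.subtype_mk _
  have e_homeo : IsQuotientMap (fun p : HFiber W w0 a => (⟨p.1, hmem p⟩ : ↥(f ⁻¹' B))) := by
    have : IsHomeomorph (fun p : HFiber W w0 a => (⟨p.1, hmem p⟩ : ↥(f ⁻¹' B))) := by
      refine isHomeomorph_iff_exists_inverse.mpr ⟨e_cont,
        fun q : ↥(f ⁻¹' B) => (⟨q.1, (hb q.1.1).symm.trans q.2⟩ : HFiber W w0 a), ?_, ?_, ?_⟩
      · intro p; exact Subtype.ext rfl
      · intro q; exact Subtype.ext rfl
      · exact continuous_subtype_val.subtype_mk _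
    exact this.isQuotientMap
  have e2_homeo : IsQuotientMap
      (fun q : ↥B => (⟨q.1, q.2⟩ : HFiber W w0 (b : C(QuotBy T, W)))) := by
    have : IsHomeomorph (fun q : ↥B => (⟨q.1, q.2⟩ : HFiber W w0 (b : C(QuotBy T, W)))) := by
      refine isHomeomorph_iff_exists_inverse.mpr ⟨e2_cont,
        fun q : HFiber W w0 (b : C(QuotBy T, W)) => (⟨q.1, q.2⟩ : ↥B), ?_, ?_, ?_⟩
      · intro p; exact Subtype.ext rfl
      · intro q; exact Subtype.ext rfl
      · exact continuous_subtype_val.subtype_mk _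
    exact this.isQuotientMap
  have hlfactor : ⇑l = (fun q : ↥B => (⟨q.1, q.2⟩ : HFiber W w0 (b : C(QuotBy T, W)))) ∘
      (B.restrictPreimage f) ∘ (fun p : HFiber W w0 a => (⟨p.1, hmem p⟩ : ↥(f ⁻¹' B))) := by
    funext p
    exact Subtype.ext rfl
  have hlq : IsQuotientMap ⇑l := by
    rw [hlfactor]
    exact e2_homeo.comp (hg.comp e_homeo)
  -- a section of l
  choose sec hsec using hlq.surjective
  -- range of j consists exactly of points over T
  have mem_range_j : ∀ p : HFiber W w0 a, p.1.1 ∈ T →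
      p ∈ Set.range (hfMap (w0 := w0) (g := ContinuousMap.const T w0)
        (⟨Subtype.val, continuous_subtype_val⟩ : C(T, V)) (fun x => ha x x.2)) := by
    rintro ⟨⟨x, v⟩, hp⟩ hx
    refine ⟨⟨((⟨x, hx⟩ : T), v), ?_⟩, ?_⟩
    · show (ContinuousMap.const T w0) (⟨x, hx⟩ : T) = v.1 1
      exact (ha x hx).symm.trans hp
    · exact Subtype.ext rfl
  obtain ⟨H⟩ := hst
  -- the homotopy H is constant on the fibres of l
  have hconst : ∀ p p' : HFiber W w0 a, l p = l p' → ∀ u : I, H (u, p) = H (u, p') := by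
    intro p p' h u
    have hv : p.1.2 = p'.1.2 := congrArg (fun q : HFiber W w0 (b : C(QuotBy T, W)) => q.1.2) h
    have hx : Quot.mk rel p.1.1 = Quot.mk rel p'.1.1 :=
      congrArg (fun q : HFiber W w0 (b : C(QuotBy T, W)) => q.1.1) h
    rcases (quoteq _ _).mp hx with heq | ⟨h1, h2⟩
    · have : p = p' := Subtype.ext (Prod.ext heq hv)
      rw [this]
    · rw [H.eq_snd u (mem_range_j p h1), H.eq_snd u (mem_range_j p' h2)]
      show t (l p) = t (l p')
      rw [h]
  have hsconst : ∀ p p' : HFiber W w0 a, l p = l p' → s p = s p' := by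
    intro p p' h
    have h0 := hconst p p' h 0
    rw [H.apply_zero, H.apply_zero] at h0
    exact Subtype.ext h0
  -- the factorization r
  have hrcont : Continuous (fun q => s (sec q)) := by
    rw [hlq.continuous_iff]
    have : (fun q => s (sec q)) ∘ ⇑l = ⇑s := by
      funext p
      exact hsconst _ _ (hsec (l p))
    rw [this]
    exact s.continuous
  refine ⟨⟨fun q => s (sec q), hrcont⟩, ⟨?_, ?_⟩, ?_⟩
  · ext p
    exact congrArg Subtype.val (hsconst _ _ (hsec (l p)))
  · -- the homotopy between in ∘ r and t
    set Hc : C(HFiber W w0 a × I, Y) :=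
      ⟨fun z => H (z.2, z.1),
        H.toContinuousMap.continuous.comp (continuous_snd.prodMk continuous_fst)⟩ with hHc
    have hkcont : Continuous (fun q => Hc.curry (sec q)) := by
      rw [hlq.continuous_iff]
      have : (fun q => Hc.curry (sec q)) ∘ ⇑l = fun p => Hc.curry p := by
        funext p
        exact ContinuousMap.ext fun u => hconst _ _ (hsec (l p)) u
      rw [this]
      exact Hc.curry.continuous
    set K : C(HFiber W w0 (b : C(QuotBy T, W)) × I, Y) :=
      ContinuousMap.uncurry ⟨fun q => Hc.curry (sec q), hkcont⟩ with hK
    refine ⟨⟨⟨⟨fun z => K (z.2, z.1),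
        K.continuous.comp (continuous_snd.prodMk continuous_fst)⟩, ?_, ?_⟩, ?_⟩⟩
    · intro q
      show H (0, sec q) = _
      exact H.apply_zero (sec q)
    · intro q
      show H (1, sec q) = _
      rw [H.apply_one]
      show t (l (sec q)) = t q
      rw [hsec]
    · intro u q hq
      show H (u, sec q) = _
      have hq' : (sec q).1.1 ∈ T := by
        have : Quot.mk rel (sec q).1.1 = Quot.mk rel t0 := by
          have := congrArg (fun z : HFiber W w0 (b : C(QuotBy T, W)) => z.1.1) (hsec q)
          exact this.trans hq
        rcases (quoteq _ _).mp this with heq | ⟨h1, _⟩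
        · rw [heq]; exact ht0
        · exact h1
      exact H.eq_fst u (mem_range_j _ hq')
  · -- uniqueness
    intro r' hr'
    ext q
    have h1 : r' (l (sec q)) = s (sec q) := ContinuousMap.congr_fun hr' (sec q)
    have h2 : r' q = s (sec q) := (congrArg r' (hsec q)).symm.trans h1
    exact congrArg Subtype.val h2

end
end

section
/- Let X be a pointed space, L an abelian group, and f: Π_n(X) → L a homotopy invariant functional with deg f ≤ r. Let b_0, b ∈ Π_n(X) be spheroids with [b_0] = 0 and [b] = [[…[[v_0, v_1], v_2], …, v_r]] an (r+1)-fold iterated Whitehead product of classes v_s ∈ π_{k_s}(X) with k_0 + … + k_r = n + r. Then f(b) = f(b_0). -/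
open scoped unitInterval Topology
open ContinuousMap
open scoped Classical

noncomputable section

abbrev Cube (n : ℕ) := Fin n → I

/-- Restriction of a continuous map to a subset of the cube. -/
def restrictMap {n : ℕ} {X : Type*} [TopologicalSpace X] (a : C(Cube n, X))
    (E : Set (Cube n)) : C(E, X) :=
  a.comp ⟨Subtype.val, continuous_subtype_val⟩

/-- `Π(E, X)`: maps `E → X` sending `E ∩ ∂Iⁿ` to the basepoint. -/
def PartMap {n : ℕ} (E : Set (Cube n)) (X : Type*) [TopologicalSpace X] (x0 : X) : Type _ :=
  {a : C(E, X) // ∀ y : E, (y : Cube n) ∈ Cube.boundary (Fin n) → a y = x0}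

/-- Restriction of a spheroid to `E`, as an element of `Π(E, X)`. -/
def sphRestrict {n : ℕ} {X : Type*} [TopologicalSpace X] {x0 : X}
    (a : GenLoop (Fin n) X x0) (E : Set (Cube n)) : PartMap E X x0 :=
  ⟨restrictMap a.1 E, fun y hy => a.2 y hy⟩

/-- The set `Γ(r)` of unions of at most `r` elements of `Γ`, as a `Finset`. -/
def coverUnions {n : ℕ} (Γ : Finset (Set (Cube n))) (r : ℕ) : Finset (Set (Cube n)) :=
  (Γ.powerset.filter fun S => S.card ≤ r).image fun S => ⋃₀ (S : Set (Set (Cube n)))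

/-- `deg f ≤ r`: for every finite open cover `Γ` of `Iⁿ` there are functionals
`g E : Π(E, X) → L`, `E ∈ Γ(r)`, with `f a = ∑_{E ∈ Γ(r)} g E (a|_E)`. -/
def HasDegLE {n : ℕ} {X : Type*} [TopologicalSpace X] {x0 : X} {L : Type*} [AddCommGroup L]
    (f : GenLoop (Fin n) X x0 → L) (r : ℕ) : Prop :=
  ∀ Γ : Finset (Set (Cube n)), (∀ E ∈ Γ, IsOpen E) → (∀ u : Cube n, ∃ E ∈ Γ, u ∈ E) →
    ∃ g : (E : Set (Cube n)) → (PartMap E X x0 → L),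
      ∀ a : GenLoop (Fin n) X x0, f a = ∑ E ∈ coverUnions Γ r, g E (sphRestrict a E)

/-- Map `[-1,1] → I`, `x ↦ (x+1)/2` (clamped). -/
def toI (x : ℝ) : I := Set.projIcc 0 1 zero_le_one ((x + 1) / 2)

/-- Cube coordinates recentred to `[-1,1]`. -/
def vmap {m : ℕ} (u : Cube m) : Fin m → ℝ := fun i => 2 * (u i : ℝ) - 1

/-- The sup-norm distance of a cube point from the centre. -/
def rfun {m : ℕ} (u : Cube m) : ℝ := ‖vmap u‖

lemma vmap_continuous (m : ℕ) : Continuous (vmap (m := m)) :=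
  continuous_pi fun i => by
    have : Continuous fun u : Cube m => (u i : ℝ) :=
      continuous_subtype_val.comp (continuous_apply i)
    continuity

lemma rfun_continuous (m : ℕ) : Continuous (rfun (m := m)) :=
  continuous_norm.comp (vmap_continuous m)

/-- The raw lateral coordinates of the collapse map. -/
def latRaw {m : ℕ} (u : Cube m) (i : Fin m) : ℝ :=
  min 1 (3 * (1 - rfun u)) * vmap u i / max (rfun u) (1 / 3) - max 0 (3 * rfun u - 2)

/-- The raw height coordinate of the collapse map. -/
def htRaw {m : ℕ} (u : Cube m) : ℝ := max (-1) (min 1 (3 - 6 * rfun u))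

lemma htRaw_continuous (m : ℕ) : Continuous (htRaw (m := m)) :=
  continuous_const.max (continuous_const.min
    (continuous_const.sub (continuous_const.mul (rfun_continuous m))))

/-- The degree-one collapse map `Iᵐ → ∂Iᵐ⁺¹` sending `∂Iᵐ` to the corner `(0,…,0)`. -/
def collapseCM (m : ℕ) : C(Cube m, Cube (m + 1)) := by
  refine ⟨fun u => Fin.snoc (fun i => toI (latRaw u i)) (toI (htRaw u)), ?_⟩
  apply continuous_pi
  intro i
  refine Fin.lastCases ?_ ?_ i
  · simp only [Fin.snoc_last]
    exact continuous_projIcc.comp (((htRaw_continuous m).add continuous_const).div_const 2)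
  · intro j
    simp only [Fin.snoc_castSucc]
    have hlat : Continuous fun u : Cube m => latRaw u j := by
      have hr := rfun_continuous m
      have hv : Continuous fun u : Cube m => vmap u j :=
        (continuous_apply j).comp (vmap_continuous m)
      have hden : Continuous fun u : Cube m => max (rfun u) (1 / 3) :=
        hr.max continuous_const
      have hden' : ∀ u : Cube m, max (rfun u) (1 / 3) ≠ 0 := fun u =>
        ne_of_gt (lt_of_lt_of_le (by norm_num) (le_max_right _ _))
      have hnum : Continuous fun u : Cube m => min 1 (3 * (1 - rfun u)) * vmap u j :=
        (continuous_const.min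
          (continuous_const.mul (continuous_const.sub hr))).mul hv
      exact (hnum.div hden hden').sub
        (continuous_const.max ((continuous_const.mul hr).sub continuous_const))
    exact continuous_projIcc.comp ((hlat.add continuous_const).div_const 2)

/-- First-block coordinates of a point of `I^{(k+1)+(l+1)}`. -/
def sPart {k l : ℕ} (w : Cube (k + 1 + (l + 1))) : Cube (k + 1) := fun i =>
  w (Fin.castAdd (l + 1) i)

/-- Second-block coordinates of a point of `I^{(k+1)+(l+1)}`. -/
def tPart {k l : ℕ} (w : Cube (k + 1 + (l + 1))) : Cube (l + 1) := fun j =>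
  w (Fin.natAdd (k + 1) j)

lemma isClosed_cubeBoundary (n : ℕ) : IsClosed (Cube.boundary (Fin n)) := by
  have h : Cube.boundary (Fin n) =
      ⋃ i : Fin n, ({y : Cube n | y i = 0} ∪ {y : Cube n | y i = 1}) := by
    ext y
    simp [Cube.boundary]
  rw [h]
  exact isClosed_iUnion_of_finite fun i =>
    (isClosed_eq (continuous_apply i) continuous_const).union
      (isClosed_eq (continuous_apply i) continuous_const)

lemma mem_boundary_split {k l : ℕ} {w : Cube (k + 1 + (l + 1))}
    (hw : w ∈ Cube.boundary (Fin (k + 1 + (l + 1)))) :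
    sPart w ∈ Cube.boundary (Fin (k + 1)) ∨ tPart w ∈ Cube.boundary (Fin (l + 1)) := by
  obtain ⟨i, hi⟩ := hw
  refine Fin.addCases (motive := fun i => w i = 0 ∨ w i = 1 →
    sPart w ∈ Cube.boundary (Fin (k + 1)) ∨ tPart w ∈ Cube.boundary (Fin (l + 1)))
    (fun j hj => Or.inl ⟨j, hj⟩) (fun j hj => Or.inr ⟨j, hj⟩) i hi

lemma abs_vmap_le_one {m : ℕ} (u : Cube m) (i : Fin m) : |vmap u i| ≤ 1 := by
  have h0 := (u i).2.1
  have h1 := (u i).2.2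
  rw [abs_le]
  constructor <;> [simp only [vmap]; simp only [vmap]] <;> nlinarith

lemma rfun_nonneg {m : ℕ} (u : Cube m) : 0 ≤ rfun u := norm_nonneg _

lemma rfun_le_one {m : ℕ} (u : Cube m) : rfun u ≤ 1 := by
  refine pi_norm_le_iff_of_nonneg zero_le_one |>.2 fun i => ?_
  simpa [Real.norm_eq_abs] using abs_vmap_le_one u i

lemma rfun_eq_one_of_boundary {m : ℕ} {u : Cube m} (hu : u ∈ Cube.boundary (Fin m)) :
    rfun u = 1 := by
  obtain ⟨i, hi⟩ := hu
  refine le_antisymm (rfun_le_one u) ?_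
  have h : |vmap u i| = 1 := by
    rcases hi with h | h <;> simp [vmap, h] <;> norm_num
  calc (1 : ℝ) = |vmap u i| := h.symm
    _ = ‖vmap u i‖ := (Real.norm_eq_abs _).symm
    _ ≤ ‖vmap u‖ := norm_le_pi_norm (vmap u) i
lemma toI_one : toI 1 = 1 := by
  apply Subtype.ext
  simp [toI, Set.projIcc]

lemma toI_neg_one : toI (-1) = 0 := by
  apply Subtype.ext
  simp [toI, Set.projIcc]

lemma collapse_mem_boundary (m : ℕ) (u : Cube m) :
    collapseCM m u ∈ Cube.boundary (Fin (m + 1)) := by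
  by_cases h1 : rfun u ≤ 1 / 3
  · refine ⟨Fin.last m, Or.inr ?_⟩
    show (Fin.snoc (fun j => toI (latRaw u j)) (toI (htRaw u)) : Cube (m + 1)) (Fin.last m) = 1
    rw [Fin.snoc_last]
    have hh : htRaw u = 1 := by
      have h2 : (1 : ℝ) ≤ 3 - 6 * rfun u := by linarith
      have h3 : min 1 (3 - 6 * rfun u) = 1 := min_eq_left h2
      rw [htRaw, h3]
      norm_num
    rw [hh, toI_one]
  · by_cases h2 : (2 : ℝ) / 3 ≤ rfun u
    · refine ⟨Fin.last m, Or.inl ?_⟩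
      show (Fin.snoc (fun j => toI (latRaw u j)) (toI (htRaw u)) : Cube (m + 1)) (Fin.last m) = 0
      rw [Fin.snoc_last]
      have hh : htRaw u = -1 := by
        have h3 : 3 - 6 * rfun u ≤ -1 := by linarith
        have h4 : min 1 (3 - 6 * rfun u) = 3 - 6 * rfun u := min_eq_right (by linarith)
        rw [htRaw, h4]
        exact max_eq_left h3
      rw [hh, toI_neg_one]
    · push_neg at h1 h2
      have hne : Nonempty (Fin m) := by
        rcases Nat.eq_zero_or_pos m with hm | hm
        · exfalso
          subst hm
          have hv : vmap u = 0 := funext fun i => i.elim0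
          rw [rfun, hv, norm_zero] at h1
          norm_num at h1
        · exact ⟨⟨0, hm⟩⟩
      obtain ⟨i, hi⟩ := Finite.exists_max fun i : Fin m => |vmap u i|
      have hri : |vmap u i| = rfun u := by
        refine le_antisymm ?_ ?_
        · exact (Real.norm_eq_abs _).symm.trans_le (norm_le_pi_norm (vmap u) i)
        · refine pi_norm_le_iff_of_nonneg (abs_nonneg _) |>.2 fun j => ?_
          simpa [Real.norm_eq_abs] using hi j
      have hr0 : rfun u ≠ 0 := by linarith
      have hlat : latRaw u i = vmap u i / rfun u := by
        have e1 : min 1 (3 * (1 - rfun u)) = 1 := min_eq_left (by linarith)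
        have e2 : max (rfun u) (1 / 3) = rfun u := max_eq_left (le_of_lt h1)
        have e3 : max 0 (3 * rfun u - 2) = 0 := max_eq_left (by linarith)
        rw [latRaw, e1, e2, e3]
        ring
      rcases (abs_eq (rfun_nonneg u)).1 hri with hv | hv
      · refine ⟨i.castSucc, Or.inr ?_⟩
        show (Fin.snoc (fun j => toI (latRaw u j)) (toI (htRaw u)) : Cube (m + 1)) i.castSucc = 1
        rw [Fin.snoc_castSucc, hlat, hv, div_self hr0, toI_one]
      · refine ⟨i.castSucc, Or.inl ?_⟩
        show (Fin.snoc (fun j => toI (latRaw u j)) (toI (htRaw u)) : Cube (m + 1)) i.castSucc = 0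
        rw [Fin.snoc_castSucc, hlat, hv, neg_div, div_self hr0, toI_neg_one]

lemma collapse_of_boundary {m : ℕ} {u : Cube m} (hu : u ∈ Cube.boundary (Fin m)) :
    collapseCM m u = fun _ => 0 := by
  have hr : rfun u = 1 := rfun_eq_one_of_boundary hu
  funext i
  refine Fin.lastCases ?_ ?_ i
  · show (Fin.snoc (fun j => toI (latRaw u j)) (toI (htRaw u)) : Cube (m + 1)) (Fin.last m) = 0
    rw [Fin.snoc_last]
    have hh : htRaw u = -1 := by
      rw [htRaw, hr]
      norm_num
    rw [hh, toI_neg_one]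
  · intro j
    show (Fin.snoc (fun j => toI (latRaw u j)) (toI (htRaw u)) : Cube (m + 1)) j.castSucc = 0
    rw [Fin.snoc_castSucc]
    have hl : latRaw u j = -1 := by
      rw [latRaw, hr]
      norm_num
    rw [hl, toI_neg_one]
lemma sPart_continuous {k l : ℕ} : Continuous (sPart (k := k) (l := l)) :=
  continuous_pi fun i => continuous_apply _

lemma tPart_continuous {k l : ℕ} : Continuous (tPart (k := k) (l := l)) :=
  continuous_pi fun j => continuous_apply _

/-- The Whitehead product of two spheroids `a ∈ Π_{k+1}(X)`, `b ∈ Π_{l+1}(X)`: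
the composite of the collapse map `I^{k+l+1} → ∂I^{k+l+2} = ∂(I^{k+1} × I^{l+1})`
with the join map sending `(s, t)` to `a(s)` for `t ∈ ∂I^{l+1}` and to `b(t)` for
`s ∈ ∂I^{k+1}`. -/
def whSpheroid {X : Type*} [TopologicalSpace X] {x0 : X} {k l : ℕ}
    (a : GenLoop (Fin (k + 1)) X x0) (b : GenLoop (Fin (l + 1)) X x0) :
    GenLoop (Fin (k + 1 + l)) X x0 := by
  classical
  refine ⟨⟨Set.piecewise
      {u : Cube (k + 1 + l) |
        tPart (k := k) (l := l) (collapseCM (k + 1 + l) u) ∈ Cube.boundary (Fin (l + 1))}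
      (fun u => a.1 (sPart (k := k) (l := l) (collapseCM (k + 1 + l) u)))
      (fun u => b.1 (tPart (k := k) (l := l) (collapseCM (k + 1 + l) u))), ?_⟩, ?_⟩
  · have hSclosed : IsClosed {u : Cube (k + 1 + l) |
        tPart (k := k) (l := l) (collapseCM (k + 1 + l) u) ∈ Cube.boundary (Fin (l + 1))} :=
      (isClosed_cubeBoundary (l + 1)).preimage
        (tPart_continuous.comp (collapseCM (k + 1 + l)).continuous)
    have hS'closed : IsClosed {u : Cube (k + 1 + l) |
        sPart (k := k) (l := l) (collapseCM (k + 1 + l) u) ∈ Cube.boundary (Fin (k + 1))} :=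
      (isClosed_cubeBoundary (k + 1)).preimage
        (sPart_continuous.comp (collapseCM (k + 1 + l)).continuous)
    refine Continuous.piecewise ?_
      (a.1.continuous.comp (sPart_continuous.comp (collapseCM (k + 1 + l)).continuous))
      (b.1.continuous.comp (tPart_continuous.comp (collapseCM (k + 1 + l)).continuous))
    intro u hu
    rw [frontier_eq_closure_inter_closure] at hu
    have htmem : tPart (k := k) (l := l) (collapseCM (k + 1 + l) u) ∈
        Cube.boundary (Fin (l + 1)) := by
      have := hu.1
      rwa [hSclosed.closure_eq] at this
    have hsmem : sPart (k := k) (l := l) (collapseCM (k + 1 + l) u) ∈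
        Cube.boundary (Fin (k + 1)) := by
      have hsub : {u : Cube (k + 1 + l) |
          tPart (k := k) (l := l) (collapseCM (k + 1 + l) u) ∈
            Cube.boundary (Fin (l + 1))}ᶜ ⊆
          {u : Cube (k + 1 + l) |
            sPart (k := k) (l := l) (collapseCM (k + 1 + l) u) ∈
              Cube.boundary (Fin (k + 1))} := by
        intro u' hu'
        rcases mem_boundary_split (collapse_mem_boundary (k + 1 + l) u') with h | h
        · exact h
        · exact absurd h hu'
      have := hu.2
      have h2 := (closure_mono hsub).trans (le_of_eq hS'closed.closure_eq) this
      exact h2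
    rw [a.prop _ hsmem, b.prop _ htmem]
  · intro u hu
    have hc := collapse_of_boundary hu
    have htmem : tPart (k := k) (l := l) (collapseCM (k + 1 + l) u) ∈
        Cube.boundary (Fin (l + 1)) := by
      rw [hc]
      exact ⟨0, Or.inl rfl⟩
    have hsmem : sPart (k := k) (l := l) (collapseCM (k + 1 + l) u) ∈
        Cube.boundary (Fin (k + 1)) := by
      rw [hc]
      exact ⟨0, Or.inl rfl⟩
    show Set.piecewise
        {u : Cube (k + 1 + l) |
          tPart (k := k) (l := l) (collapseCM (k + 1 + l) u) ∈ Cube.boundary (Fin (l + 1))}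
        (fun u => a.1 (sPart (k := k) (l := l) (collapseCM (k + 1 + l) u)))
        (fun u => b.1 (tPart (k := k) (l := l) (collapseCM (k + 1 + l) u))) u = x0
    have humem : u ∈ {u : Cube (k + 1 + l) |
        tPart (k := k) (l := l) (collapseCM (k + 1 + l) u) ∈ Cube.boundary (Fin (l + 1))} :=
      htmem
    rw [Set.piecewise_eq_of_mem _ _ _ humem]
    exact a.prop _ hsmem

/-- The dimension bookkeeping for iterated Whitehead products:
`whDim r ks = ks 0 + ⋯ + ks r`. -/
def whDim : (r : ℕ) → (Fin (r + 1) → ℕ) → ℕ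
  | 0, ks => ks 0
  | r + 1, ks => whDim r (fun s => ks s.castSucc) + ks (Fin.last (r + 1))

/-- Transport of spheroids along an equality of dimensions. -/
def glCast {X : Type*} [TopologicalSpace X] {x0 : X} {n n' : ℕ} (h : n = n')
    (a : GenLoop (Fin n) X x0) : GenLoop (Fin n') X x0 := h ▸ a

/-- The iterated Whitehead product `[[…[[a₀, a₁], a₂], …], a_r]` of spheroids
`a_s ∈ Π_{ks s + 1}(X)`. -/
def whIter {X : Type*} [TopologicalSpace X] {x0 : X} :
    (r : ℕ) → (ks : Fin (r + 1) → ℕ) → (∀ s, GenLoop (Fin (ks s + 1)) X x0) →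
      GenLoop (Fin (whDim r ks + 1)) X x0
  | 0, _, as => as 0
  | r + 1, ks, as =>
      glCast (by simp only [whDim]; omega)
        (whSpheroid (whIter r (fun s => ks s.castSucc) (fun s => as s.castSucc))
          (as (Fin.last (r + 1))))

/-! ### Auxiliary machinery for the proof -/

section AuxProof

variable {X : Type*} [TopologicalSpace X] {x0 : X}

/-- Re-indexing of cube coordinates along an equality of dimensions. -/
def ccast {n n' : ℕ} (h : n = n') (u : Cube n') : Cube n := fun i => u (Fin.cast h i)

lemma ccast_continuous {n n' : ℕ} (h : n = n') : Continuous (ccast h) :=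
  continuous_pi fun i => continuous_apply _

lemma glCast_apply {n n' : ℕ} (h : n = n') (a : GenLoop (Fin n) X x0) (u : Cube n') :
    (glCast h a).1 u = a.1 (ccast h u) := by
  subst h; rfl

lemma glCast_homotopic {n n' : ℕ} (h : n = n') {a b : GenLoop (Fin n) X x0}
    (hab : GenLoop.Homotopic a b) :
    GenLoop.Homotopic (glCast h a) (glCast h b) := by
  subst h; exact hab

lemma glCast_const {n n' : ℕ} (h : n = n') :
    glCast (X := X) (x0 := x0) h GenLoop.const = GenLoop.const := by
  subst h; rfl

/-- The closed region of the cube where the `a`-branch of `whSpheroid` is used. -/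
def whRegion (k l : ℕ) : Set (Cube (k + 1 + l)) :=
  {u : Cube (k + 1 + l) |
    tPart (k := k) (l := l) (collapseCM (k + 1 + l) u) ∈ Cube.boundary (Fin (l + 1))}

lemma whSpheroid_apply_mem {k l : ℕ} (a : GenLoop (Fin (k + 1)) X x0)
    (b : GenLoop (Fin (l + 1)) X x0) {u : Cube (k + 1 + l)} (hu : u ∈ whRegion k l) :
    (whSpheroid a b).1 u = a.1 (sPart (k := k) (l := l) (collapseCM (k + 1 + l) u)) := by
  change Set.piecewise (whRegion k l)
    (fun u => a.1 (sPart (k := k) (l := l) (collapseCM (k + 1 + l) u)))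
    (fun u => b.1 (tPart (k := k) (l := l) (collapseCM (k + 1 + l) u))) u = _
  exact Set.piecewise_eq_of_mem _ _ _ hu

lemma whSpheroid_apply_not_mem {k l : ℕ} (a : GenLoop (Fin (k + 1)) X x0)
    (b : GenLoop (Fin (l + 1)) X x0) {u : Cube (k + 1 + l)} (hu : u ∉ whRegion k l) :
    (whSpheroid a b).1 u = b.1 (tPart (k := k) (l := l) (collapseCM (k + 1 + l) u)) := by
  change Set.piecewise (whRegion k l)
    (fun u => a.1 (sPart (k := k) (l := l) (collapseCM (k + 1 + l) u)))
    (fun u => b.1 (tPart (k := k) (l := l) (collapseCM (k + 1 + l) u))) u = _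
  exact Set.piecewise_eq_of_notMem _ _ _ hu

lemma sPart_boundary_of_not_mem {k l : ℕ} {u : Cube (k + 1 + l)} (hu : u ∉ whRegion k l) :
    sPart (k := k) (l := l) (collapseCM (k + 1 + l) u) ∈ Cube.boundary (Fin (k + 1)) := by
  rcases mem_boundary_split (collapse_mem_boundary (k + 1 + l) u) with h | h
  · exact h
  · exact absurd h hu

lemma whRegion_isClosed (k l : ℕ) : IsClosed (whRegion k l) :=
  (isClosed_cubeBoundary (l + 1)).preimage
    (tPart_continuous.comp (collapseCM (k + 1 + l)).continuous)

lemma frontier_whRegion {k l : ℕ} {u : Cube (k + 1 + l)} (hu : u ∈ frontier (whRegion k l)) :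
    tPart (k := k) (l := l) (collapseCM (k + 1 + l) u) ∈ Cube.boundary (Fin (l + 1)) ∧
      sPart (k := k) (l := l) (collapseCM (k + 1 + l) u) ∈ Cube.boundary (Fin (k + 1)) := by
  rw [frontier_eq_closure_inter_closure] at hu
  have ht : u ∈ whRegion k l := by
    have := hu.1
    rwa [(whRegion_isClosed k l).closure_eq] at this
  refine ⟨ht, ?_⟩
  have hS'closed : IsClosed {u : Cube (k + 1 + l) |
      sPart (k := k) (l := l) (collapseCM (k + 1 + l) u) ∈ Cube.boundary (Fin (k + 1))} :=
    (isClosed_cubeBoundary (k + 1)).preimage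
      (sPart_continuous.comp (collapseCM (k + 1 + l)).continuous)
  have hsub : (whRegion k l)ᶜ ⊆ {u : Cube (k + 1 + l) |
      sPart (k := k) (l := l) (collapseCM (k + 1 + l) u) ∈ Cube.boundary (Fin (k + 1))} :=
    fun u' hu' => sPart_boundary_of_not_mem hu'
  exact (closure_mono hsub).trans (le_of_eq hS'closed.closure_eq) hu.2

lemma mem_whRegion_of_boundary {k l : ℕ} {u : Cube (k + 1 + l)}
    (hu : u ∈ Cube.boundary (Fin (k + 1 + l))) : u ∈ whRegion k l := by
  show tPart (k := k) (l := l) (collapseCM (k + 1 + l) u) ∈ Cube.boundary (Fin (l + 1))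
  rw [collapse_of_boundary hu]
  exact ⟨0, Or.inl rfl⟩

lemma sPart_boundary_of_boundary {k l : ℕ} {u : Cube (k + 1 + l)}
    (hu : u ∈ Cube.boundary (Fin (k + 1 + l))) :
    sPart (k := k) (l := l) (collapseCM (k + 1 + l) u) ∈ Cube.boundary (Fin (k + 1)) := by
  rw [collapse_of_boundary hu]
  exact ⟨0, Or.inl rfl⟩

lemma continuous_projIccI {α : Type*} [TopologicalSpace α] {f : α → ℝ} (hf : Continuous f) :
    Continuous fun x => Set.projIcc (0 : ℝ) 1 zero_le_one (f x) :=
  continuous_projIcc.comp hf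

/-- A homotopy of the Whitehead spheroid construction in both arguments. -/
lemma whSpheroid_homotopic {k l : ℕ} {a a' : GenLoop (Fin (k + 1)) X x0}
    {b b' : GenLoop (Fin (l + 1)) X x0} (ha : GenLoop.Homotopic a a')
    (hb : GenLoop.Homotopic b b') :
    GenLoop.Homotopic (whSpheroid a b) (whSpheroid a' b') := by
  obtain ⟨H⟩ := ha
  obtain ⟨G⟩ := hb
  have hHb : ∀ (t : I) (v : Cube (k + 1)), v ∈ Cube.boundary (Fin (k + 1)) →
      H (t, v) = x0 := fun t v hv => (H.eq_fst t hv).trans (a.2 v hv)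
  have hGb : ∀ (t : I) (v : Cube (l + 1)), v ∈ Cube.boundary (Fin (l + 1)) →
      G (t, v) = x0 := fun t v hv => (G.eq_fst t hv).trans (b.2 v hv)
  let S : Set (I × Cube (k + 1 + l)) := (Set.univ : Set I) ×ˢ whRegion k l
  let F : I × Cube (k + 1 + l) → X := Set.piecewise S
    (fun p => H (p.1, sPart (k := k) (l := l) (collapseCM (k + 1 + l) p.2)))
    (fun p => G (p.1, tPart (k := k) (l := l) (collapseCM (k + 1 + l) p.2)))
  have hFmem : ∀ p : I × Cube (k + 1 + l), p.2 ∈ whRegion k l →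
      F p = H (p.1, sPart (k := k) (l := l) (collapseCM (k + 1 + l) p.2)) := by
    intro p hp
    exact Set.piecewise_eq_of_mem _ _ _ (Set.mem_prod.2 ⟨Set.mem_univ _, hp⟩)
  have hFnmem : ∀ p : I × Cube (k + 1 + l), p.2 ∉ whRegion k l →
      F p = G (p.1, tPart (k := k) (l := l) (collapseCM (k + 1 + l) p.2)) := by
    intro p hp
    exact Set.piecewise_eq_of_notMem _ _ _ (fun hmem => hp (Set.mem_prod.1 hmem).2)
  have hcont : Continuous F := by
    apply Continuous.piecewise
    · intro p hp
      have hfr : p.2 ∈ frontier (whRegion k l) := by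
        have : frontier S ⊆ Set.univ ×ˢ frontier (whRegion k l) := by
          rw [frontier_prod_eq]
          simp
        exact (Set.mem_prod.1 (this hp)).2
      obtain ⟨ht, hs⟩ := frontier_whRegion hfr
      rw [hHb _ _ hs, hGb _ _ ht]
    · exact H.continuous.comp (continuous_fst.prodMk
        ((sPart_continuous.comp ((collapseCM (k + 1 + l)).continuous)).comp continuous_snd))
    · exact G.continuous.comp (continuous_fst.prodMk
        ((tPart_continuous.comp ((collapseCM (k + 1 + l)).continuous)).comp continuous_snd))
  refine ⟨⟨⟨⟨F, hcont⟩, ?_, ?_⟩, ?_⟩⟩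
  · intro u
    show F (0, u) = _
    by_cases hu : u ∈ whRegion k l
    · rw [hFmem (0, u) hu, H.apply_zero, whSpheroid_apply_mem a b hu]
    · rw [hFnmem (0, u) hu, G.apply_zero, whSpheroid_apply_not_mem a b hu]
  · intro u
    show F (1, u) = _
    by_cases hu : u ∈ whRegion k l
    · rw [hFmem (1, u) hu, H.apply_one, whSpheroid_apply_mem a' b' hu]
    · rw [hFnmem (1, u) hu, G.apply_one, whSpheroid_apply_not_mem a' b' hu]
  · intro t u hu
    have hmem := mem_whRegion_of_boundary hu
    show F (t, u) = (whSpheroid a b).1 u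
    rw [hFmem (t, u) hmem, hHb t _ (sPart_boundary_of_boundary hu),
      (whSpheroid a b).2 u hu]

/-- The contraction map `x ↦ (1-t)·x` on `I`. -/
def shrinkFun (t : ℝ) (x : I) : I := Set.projIcc (0 : ℝ) 1 zero_le_one ((1 - t) * x)

lemma shrinkFun_zero (x : I) : shrinkFun 0 x = x := by
  simp [shrinkFun]

lemma shrinkFun_one (x : I) : shrinkFun 1 x = 0 := by
  apply Subtype.ext
  simp [shrinkFun, Set.projIcc]

lemma shrinkFun_zero_right (t : ℝ) : shrinkFun t 0 = 0 := by
  apply Subtype.ext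
  simp [shrinkFun, Set.projIcc]

lemma whSpheroid_const_right_eq {k l : ℕ} (a : GenLoop (Fin (k + 1)) X x0)
    (u : Cube (k + 1 + l)) :
    (whSpheroid a (GenLoop.const : GenLoop (Fin (l + 1)) X x0)).1 u =
      a.1 (sPart (k := k) (l := l) (collapseCM (k + 1 + l) u)) := by
  by_cases hu : u ∈ whRegion k l
  · exact whSpheroid_apply_mem _ _ hu
  · rw [whSpheroid_apply_not_mem _ _ hu]
    exact ((a.2 _ (sPart_boundary_of_not_mem hu))).symm

lemma whSpheroid_const_left_eq {k l : ℕ} (b : GenLoop (Fin (l + 1)) X x0)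
    (u : Cube (k + 1 + l)) :
    (whSpheroid (GenLoop.const : GenLoop (Fin (k + 1)) X x0) b).1 u =
      b.1 (tPart (k := k) (l := l) (collapseCM (k + 1 + l) u)) := by
  by_cases hu : u ∈ whRegion k l
  · rw [whSpheroid_apply_mem _ _ hu]
    exact (b.2 _ hu).symm
  · exact whSpheroid_apply_not_mem _ _ hu

lemma whSpheroid_const_right {k l : ℕ} (a : GenLoop (Fin (k + 1)) X x0) :
    GenLoop.Homotopic (whSpheroid a (GenLoop.const : GenLoop (Fin (l + 1)) X x0))
      GenLoop.const := by
  have hcont : Continuous fun p : I × Cube (k + 1 + l) =>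
      a.1 fun i => shrinkFun p.1 (sPart (k := k) (l := l) (collapseCM (k + 1 + l) p.2) i) := by
    refine a.1.continuous.comp (continuous_pi fun i => ?_)
    refine continuous_projIccI ?_
    have h1 : Continuous fun p : I × Cube (k + 1 + l) => (p.1 : ℝ) :=
      continuous_subtype_val.comp continuous_fst
    have h2 : Continuous fun p : I × Cube (k + 1 + l) =>
        ((sPart (k := k) (l := l) (collapseCM (k + 1 + l) p.2) i : I) : ℝ) :=
      continuous_subtype_val.comp (((continuous_apply i).comp
        (sPart_continuous.comp (collapseCM (k + 1 + l)).continuous)).comp continuous_snd)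
    exact (continuous_const.sub h1).mul h2
  have hzero : ∀ v : Cube (k + 1), (fun _ : Fin (k + 1) => (0 : I)) ∈
      Cube.boundary (Fin (k + 1)) := fun _ => ⟨0, Or.inl rfl⟩
  refine ⟨⟨⟨⟨fun p => a.1 fun i =>
      shrinkFun p.1 (sPart (k := k) (l := l) (collapseCM (k + 1 + l) p.2) i), hcont⟩,
      ?_, ?_⟩, ?_⟩⟩
  · intro u
    simp only [Set.Icc.coe_zero, shrinkFun_zero]
    exact (whSpheroid_const_right_eq a u).symm
  · intro u
    simp only [Set.Icc.coe_one, shrinkFun_one]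
    exact a.2 _ ⟨0, Or.inl rfl⟩
  · intro t u hu
    have hc := collapse_of_boundary hu
    have hs : sPart (k := k) (l := l) (collapseCM (k + 1 + l) u) = fun _ => 0 := by
      funext i
      show (collapseCM (k + 1 + l) u) _ = 0
      rw [hc]
    show a.1 (fun i => shrinkFun t (sPart (k := k) (l := l) (collapseCM (k + 1 + l) u) i)) =
      (whSpheroid a GenLoop.const).1 u
    rw [hs, (whSpheroid a GenLoop.const).2 u hu]
    have : (fun i : Fin (k + 1) => shrinkFun t ((fun _ : Fin (k + 1) => (0 : I)) i)) =
        fun _ : Fin (k + 1) => (0 : I) := by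
      funext i
      exact shrinkFun_zero_right t
    rw [this]
    exact a.2 _ ⟨0, Or.inl rfl⟩

lemma whSpheroid_const_left {k l : ℕ} (b : GenLoop (Fin (l + 1)) X x0) :
    GenLoop.Homotopic (whSpheroid (GenLoop.const : GenLoop (Fin (k + 1)) X x0) b)
      GenLoop.const := by
  have hcont : Continuous fun p : I × Cube (k + 1 + l) =>
      b.1 fun i => shrinkFun p.1 (tPart (k := k) (l := l) (collapseCM (k + 1 + l) p.2) i) := by
    refine b.1.continuous.comp (continuous_pi fun i => ?_)
    refine continuous_projIccI ?_
    have h1 : Continuous fun p : I × Cube (k + 1 + l) => (p.1 : ℝ) :=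
      continuous_subtype_val.comp continuous_fst
    have h2 : Continuous fun p : I × Cube (k + 1 + l) =>
        ((tPart (k := k) (l := l) (collapseCM (k + 1 + l) p.2) i : I) : ℝ) :=
      continuous_subtype_val.comp (((continuous_apply i).comp
        (tPart_continuous.comp (collapseCM (k + 1 + l)).continuous)).comp continuous_snd)
    exact (continuous_const.sub h1).mul h2
  refine ⟨⟨⟨⟨fun p => b.1 fun i =>
      shrinkFun p.1 (tPart (k := k) (l := l) (collapseCM (k + 1 + l) p.2) i), hcont⟩,
      ?_, ?_⟩, ?_⟩⟩
  · intro u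
    simp only [Set.Icc.coe_zero, shrinkFun_zero]
    exact (whSpheroid_const_left_eq b u).symm
  · intro u
    simp only [Set.Icc.coe_one, shrinkFun_one]
    exact b.2 _ ⟨0, Or.inl rfl⟩
  · intro t u hu
    have hc := collapse_of_boundary hu
    have hs : tPart (k := k) (l := l) (collapseCM (k + 1 + l) u) = fun _ => 0 := by
      funext i
      show (collapseCM (k + 1 + l) u) _ = 0
      rw [hc]
    show b.1 (fun i => shrinkFun t (tPart (k := k) (l := l) (collapseCM (k + 1 + l) u) i)) =
      (whSpheroid GenLoop.const b).1 u
    rw [hs, (whSpheroid GenLoop.const b).2 u hu]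
    have : (fun i : Fin (l + 1) => shrinkFun t ((fun _ : Fin (l + 1) => (0 : I)) i)) =
        fun _ : Fin (l + 1) => (0 : I) := by
      funext i
      exact shrinkFun_zero_right t
    rw [this]
    exact b.2 _ ⟨0, Or.inl rfl⟩

/-- `x ↦ (1+t)x - t/2` clamped to `I`: at `t = 0` the identity, at `t = 1` a map
collapsing a collar of `∂I` onto `∂I`. -/
def sqFun (t : ℝ) (x : I) : I := Set.projIcc (0 : ℝ) 1 zero_le_one ((1 + t) * x - t / 2)

lemma sqFun_zero (x : I) : sqFun 0 x = x := by
  simp [sqFun]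

lemma sqFun_left {t : ℝ} (ht : 0 ≤ t) : sqFun t 0 = 0 := by
  apply Subtype.ext
  have h : (1 + t) * ((0 : I) : ℝ) - t / 2 ≤ 0 := by
    simp only [Set.Icc.coe_zero, mul_zero, zero_sub]
    linarith
  simp only [sqFun]
  rw [Set.projIcc_of_le_left _ h]
  rfl

lemma sqFun_right {t : ℝ} (ht : 0 ≤ t) : sqFun t 1 = 1 := by
  apply Subtype.ext
  have h : (1 : ℝ) ≤ (1 + t) * ((1 : I) : ℝ) - t / 2 := by
    simp only [Set.Icc.coe_one, mul_one]
    linarith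
  simp only [sqFun]
  rw [Set.projIcc_of_right_le _ h]
  rfl

lemma sqFun_one_small {x : I} (hx : (x : ℝ) < 1 / 4) : sqFun 1 x = 0 := by
  apply Subtype.ext
  have h : (1 + 1) * (x : ℝ) - 1 / 2 ≤ 0 := by linarith
  simp only [sqFun]
  rw [Set.projIcc_of_le_left _ h]
  rfl

lemma sqFun_one_large {x : I} (hx : 3 / 4 < (x : ℝ)) : sqFun 1 x = 1 := by
  apply Subtype.ext
  have h : (1 : ℝ) ≤ (1 + 1) * (x : ℝ) - 1 / 2 := by linarith
  simp only [sqFun]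
  rw [Set.projIcc_of_right_le _ h]
  rfl

/-- The squashed spheroid `a ∘ (sqFun 1)`. -/
def squashGL {m : ℕ} (a : GenLoop (Fin m) X x0) : GenLoop (Fin m) X x0 := by
  refine ⟨⟨fun u => a.1 fun i => sqFun 1 (u i), ?_⟩, ?_⟩
  · refine a.1.continuous.comp (continuous_pi fun i => ?_)
    exact continuous_projIccI ((continuous_const.mul
      (continuous_subtype_val.comp (continuous_apply i))).sub continuous_const)
  · intro u hu
    obtain ⟨i, hi⟩ := hu
    refine a.2 _ ⟨i, ?_⟩
    rcases hi with h | h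
    · exact Or.inl (by show sqFun 1 (u i) = 0; rw [h, sqFun_left zero_le_one])
    · exact Or.inr (by show sqFun 1 (u i) = 1; rw [h, sqFun_right zero_le_one])

lemma squashGL_homotopic {m : ℕ} (a : GenLoop (Fin m) X x0) :
    GenLoop.Homotopic (squashGL a) a := by
  have hcont : Continuous fun p : I × Cube m =>
      a.1 fun i => sqFun (1 - (p.1 : ℝ)) (p.2 i) := by
    refine a.1.continuous.comp (continuous_pi fun i => ?_)
    refine continuous_projIccI ?_
    have h1 : Continuous fun p : I × Cube m => (p.1 : ℝ) :=
      continuous_subtype_val.comp continuous_fst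
    have h2 : Continuous fun p : I × Cube m => ((p.2 i : I) : ℝ) :=
      continuous_subtype_val.comp ((continuous_apply i).comp continuous_snd)
    exact ((continuous_const.add (continuous_const.sub h1)).mul h2).sub
      ((continuous_const.sub h1).div_const 2)
  refine ⟨⟨⟨⟨fun p => a.1 fun i => sqFun (1 - (p.1 : ℝ)) (p.2 i), hcont⟩, ?_, ?_⟩, ?_⟩⟩
  · intro u
    show a.1 (fun i => sqFun (1 - ((0 : I) : ℝ)) (u i)) = (squashGL a).1 u
    simp only [Set.Icc.coe_zero, sub_zero]
    rfl
  · intro u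
    show a.1 (fun i => sqFun (1 - ((1 : I) : ℝ)) (u i)) = a.1 u
    simp only [Set.Icc.coe_one, sub_self, sqFun_zero]
  · intro t u hu
    obtain ⟨i, hi⟩ := hu
    have ht : (0 : ℝ) ≤ 1 - (t : ℝ) := by
      have := t.2.2
      linarith
    have hmem : (fun i => sqFun (1 - (t : ℝ)) (u i)) ∈ Cube.boundary (Fin m) := by
      refine ⟨i, ?_⟩
      rcases hi with h | h
      · exact Or.inl (by show sqFun (1 - (t : ℝ)) (u i) = 0; rw [h, sqFun_left ht])
      · exact Or.inr (by show sqFun (1 - (t : ℝ)) (u i) = 1; rw [h, sqFun_right ht])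
    show a.1 (fun i => sqFun (1 - (t : ℝ)) (u i)) = (squashGL a).1 u
    rw [a.2 _ hmem]
    exact ((squashGL a).2 u ⟨i, hi⟩).symm

/-- The open collar of `∂Iᵐ` on which the squashed spheroid is constant. -/
def squashNbhd (m : ℕ) : Set (Cube m) :=
  {u | ∃ i, (u i : ℝ) < 1 / 4 ∨ 3 / 4 < (u i : ℝ)}

lemma squashNbhd_isOpen (m : ℕ) : IsOpen (squashNbhd m) := by
  have : squashNbhd m = ⋃ i : Fin m,
      ({u : Cube m | (u i : ℝ) < 1 / 4} ∪ {u : Cube m | 3 / 4 < (u i : ℝ)}) := by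
    ext u; simp [squashNbhd]
  rw [this]
  refine isOpen_iUnion fun i => IsOpen.union ?_ ?_
  · exact isOpen_lt (continuous_subtype_val.comp (continuous_apply i)) continuous_const
  · exact isOpen_lt continuous_const (continuous_subtype_val.comp (continuous_apply i))

lemma boundary_subset_squashNbhd (m : ℕ) : Cube.boundary (Fin m) ⊆ squashNbhd m := by
  rintro u ⟨i, hi⟩
  refine ⟨i, ?_⟩
  rcases hi with h | h
  · exact Or.inl (by rw [h]; norm_num)
  · exact Or.inr (by rw [h]; norm_num)

lemma squashGL_eq_const {m : ℕ} (a : GenLoop (Fin m) X x0) {u : Cube m}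
    (hu : u ∈ squashNbhd m) :
    (squashGL a).1 u = (GenLoop.const : GenLoop (Fin m) X x0).1 u := by
  obtain ⟨i, hi⟩ := hu
  have hmem : (fun i => sqFun 1 (u i)) ∈ Cube.boundary (Fin m) := by
    refine ⟨i, ?_⟩
    rcases hi with h | h
    · exact Or.inl (sqFun_one_small h)
    · exact Or.inr (sqFun_one_large h)
  exact a.2 _ hmem

lemma whIter_homotopic : ∀ (r : ℕ) (ks : Fin (r + 1) → ℕ)
    (as as' : ∀ s, GenLoop (Fin (ks s + 1)) X x0),
    (∀ s, GenLoop.Homotopic (as s) (as' s)) →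
    GenLoop.Homotopic (whIter r ks as) (whIter r ks as')
  | 0, _, _, _, h => h 0
  | r + 1, ks, as, as', h =>
    glCast_homotopic _ (whSpheroid_homotopic
      (whIter_homotopic r _ _ _ fun s => h s.castSucc) (h (Fin.last (r + 1))))

lemma whIter_null (r : ℕ) (ks : Fin (r + 1) → ℕ) (as : ∀ s, GenLoop (Fin (ks s + 1)) X x0)
    (s₀ : Fin (r + 1)) (h : GenLoop.Homotopic (as s₀) GenLoop.const) :
    GenLoop.Homotopic (whIter r ks as) GenLoop.const := by
  induction r with
  | zero =>
      have hs : s₀ = 0 := Fin.eq_zero s₀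
      subst hs
      exact h
  | succ r ih =>
      have hkey : GenLoop.Homotopic
          (whSpheroid (whIter r (fun s => ks s.castSucc) (fun s => as s.castSucc))
            (as (Fin.last (r + 1)))) GenLoop.const := by
        rcases eq_or_ne s₀ (Fin.last (r + 1)) with hs | hs
        · subst hs
          exact (whSpheroid_homotopic (GenLoop.Homotopic.refl _) h).trans
            (whSpheroid_const_right _)
        · obtain ⟨j, hj⟩ := Fin.exists_castSucc_eq.2 hs
          have hnull : GenLoop.Homotopic
              (whIter r (fun s => ks s.castSucc) (fun s => as s.castSucc)) GenLoop.const := by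
            refine ih _ _ j ?_
            rw [hj]
            exact h
          exact (whSpheroid_homotopic hnull (GenLoop.Homotopic.refl _)).trans
            (whSpheroid_const_left _)
      have h2 := glCast_homotopic (show whDim r (fun s => ks s.castSucc) + 1 +
          ks (Fin.last (r + 1)) = whDim (r + 1) ks + 1 by simp only [whDim]; omega) hkey
      rw [glCast_const] at h2
      exact h2

/-- The key geometric lemma: pairwise disjoint closed sets `K s` outside of which the value
of the iterated Whitehead spheroid does not depend on whether the `s`-th factor is replaced
by its degenerate version. -/
lemma whIter_indep (r : ℕ) (ks : Fin (r + 1) → ℕ)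
    (A D : ∀ s, GenLoop (Fin (ks s + 1)) X x0)
    (N : ∀ s, Set (Cube (ks s + 1)))
    (hNopen : ∀ s, IsOpen (N s))
    (hag : ∀ s, ∀ u ∈ N s, (A s).1 u = (D s).1 u)
    (hbd : ∀ s, Cube.boundary (Fin (ks s + 1)) ⊆ N s) :
    ∃ K : Fin (r + 1) → Set (Cube (whDim r ks + 1)),
      (∀ s, IsClosed (K s)) ∧
      (∀ s s', s ≠ s' → ∀ u, u ∈ K s → u ∉ K s') ∧
      (∀ (δ δ' : Fin (r + 1) → Bool) (u : Cube (whDim r ks + 1)),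
        (∀ s, u ∈ K s → δ s = δ' s) →
        (whIter r ks (fun s => if δ s then A s else D s)).1 u =
          (whIter r ks (fun s => if δ' s then A s else D s)).1 u) := by
  induction r with
  | zero =>
      refine ⟨fun _ => (N 0)ᶜ, fun _ => (hNopen 0).isClosed_compl, ?_, ?_⟩
      · exact fun s s' hss' => absurd ((Fin.eq_zero s).trans (Fin.eq_zero s').symm) hss'
      · intro δ δ' u h
        show (if δ 0 then A 0 else D 0).1 u = (if δ' 0 then A 0 else D 0).1 u
        by_cases hu : u ∈ N 0
        · have hAD := hag 0 u hu
          by_cases hδ : δ 0 <;> by_cases hδ' : δ' 0 <;> simp [hδ, hδ', hAD]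
        · rw [h 0 hu]
  | succ r ih =>
      obtain ⟨K', hK'c, hK'd, hK'i⟩ := ih (fun s => ks s.castSucc) (fun s => A s.castSucc)
        (fun s => D s.castSucc) (fun s => N s.castSucc) (fun s => hNopen _)
        (fun s => hag _) (fun s => hbd _)
      have he : whDim r (fun s => ks s.castSucc) + 1 + ks (Fin.last (r + 1)) =
          whDim (r + 1) ks + 1 := by simp only [whDim]; omega
      have hccc : Continuous (ccast he) := ccast_continuous he
      have hctp : Continuous fun u : Cube (whDim (r + 1) ks + 1) =>
          tPart (k := whDim r (fun s => ks s.castSucc)) (l := ks (Fin.last (r + 1)))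
            (collapseCM _ (ccast he u)) :=
        tPart_continuous.comp ((collapseCM _).continuous.comp hccc)
      have hcsp : Continuous fun u : Cube (whDim (r + 1) ks + 1) =>
          sPart (k := whDim r (fun s => ks s.castSucc)) (l := ks (Fin.last (r + 1)))
            (collapseCM _ (ccast he u)) :=
        sPart_continuous.comp ((collapseCM _).continuous.comp hccc)
      refine ⟨fun s => Fin.lastCases
        ((fun u : Cube (whDim (r + 1) ks + 1) =>
          tPart (k := whDim r (fun s => ks s.castSucc)) (l := ks (Fin.last (r + 1)))
            (collapseCM _ (ccast he u))) ⁻¹' (N (Fin.last (r + 1)))ᶜ)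
        (fun s' => (ccast he ⁻¹'
            whRegion (whDim r (fun s => ks s.castSucc)) (ks (Fin.last (r + 1)))) ∩
          ((fun u : Cube (whDim (r + 1) ks + 1) =>
            sPart (k := whDim r (fun s => ks s.castSucc)) (l := ks (Fin.last (r + 1)))
              (collapseCM _ (ccast he u))) ⁻¹' K' s')) s, ?_, ?_, ?_⟩
      · intro s
        refine Fin.lastCases ?_ ?_ s
        · simp only [Fin.lastCases_last]
          exact (hNopen (Fin.last (r + 1))).isClosed_compl.preimage hctp
        · intro s'
          simp only [Fin.lastCases_castSucc]
          exact IsClosed.inter ((whRegion_isClosed _ _).preimage hccc)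
            ((hK'c s').preimage hcsp)
      · intro s s'
        refine Fin.lastCases ?_ ?_ s <;> [skip; intro i] <;>
          refine Fin.lastCases ?_ ?_ s' <;> [skip; intro j; skip; intro j] <;>
          simp only [Fin.lastCases_last, Fin.lastCases_castSucc] <;> intro hss' u hu hmem
        · exact absurd rfl hss'
        · exact hu (hbd (Fin.last (r + 1)) hmem.1)
        · exact hmem (hbd (Fin.last (r + 1)) hu.1)
        · have hij : i ≠ j := fun hij => hss' (by rw [hij])
          exact hK'd i j hij _ hu.2 hmem.2
      · intro δ δ' u h
        have main : ∀ (ε : Fin (r + 2) → Bool),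
            (whIter (r + 1) ks (fun s => if ε s then A s else D s)).1 u =
            (whSpheroid
              (whIter r (fun s => ks s.castSucc)
                (fun s => if ε s.castSucc then A s.castSucc else D s.castSucc))
              (if ε (Fin.last (r + 1)) then A (Fin.last (r + 1))
                else D (Fin.last (r + 1)))).1 (ccast he u) := by
          intro ε
          exact glCast_apply he _ u
        rw [main δ, main δ']
        by_cases hw : ccast he u ∈
            whRegion (whDim r (fun s => ks s.castSucc)) (ks (Fin.last (r + 1)))
        · rw [whSpheroid_apply_mem _ _ hw, whSpheroid_apply_mem _ _ hw]
          refine hK'i _ _ _ ?_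
          intro s' hs'
          refine h s'.castSucc ?_
          simp only [Fin.lastCases_castSucc]
          exact ⟨hw, hs'⟩
        · rw [whSpheroid_apply_not_mem _ _ hw, whSpheroid_apply_not_mem _ _ hw]
          by_cases hN : tPart (k := whDim r (fun s => ks s.castSucc))
              (l := ks (Fin.last (r + 1))) (collapseCM _ (ccast he u)) ∈
              N (Fin.last (r + 1))
          · have hAD := hag (Fin.last (r + 1)) _ hN
            by_cases hδ : δ (Fin.last (r + 1)) <;>
              by_cases hδ' : δ' (Fin.last (r + 1)) <;> simp only [hδ, hδ', if_true, if_false]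
            · exact hAD
            · exact hAD.symm
          · have heq := h (Fin.last (r + 1)) (by simp only [Fin.lastCases_last]; exact hN)
            rw [heq]
end AuxProof

/-- The number of `false` values of `δ`. -/
def cntFalse {r : ℕ} (δ : Fin (r + 1) → Bool) : ℕ :=
  (Finset.univ.filter fun s => δ s = false).card

lemma cntFalse_update {r : ℕ} (s₀ : Fin (r + 1)) (δ : Fin (r + 1) → Bool) :
    ((-1 : ℤ) ^ cntFalse (Function.update δ s₀ (!δ s₀))) = -(-1 : ℤ) ^ cntFalse δ := by
  by_cases hδ : δ s₀
  · have hset : (Finset.univ.filter fun s => Function.update δ s₀ (!δ s₀) s = false)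
        = insert s₀ (Finset.univ.filter fun s => δ s = false) := by
      ext s
      rcases eq_or_ne s s₀ with h | h
      · subst h
        simp [Function.update_self, hδ]
      · simp [Function.update_of_ne h, h]
    rw [cntFalse, hset, Finset.card_insert_of_notMem (by simp [hδ])]
    rw [pow_succ, cntFalse]
    ring
  · have hmem : s₀ ∈ Finset.univ.filter fun s => δ s = false := by
      simp [Bool.eq_false_iff.2 hδ]
    have hset : (Finset.univ.filter fun s => Function.update δ s₀ (!δ s₀) s = false)
        = (Finset.univ.filter fun s => δ s = false).erase s₀ := by
      ext s
      rcases eq_or_ne s s₀ with h | h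
      · subst h
        simp [Function.update_self, hδ]
      · simp [Function.update_of_ne h, h]
    obtain ⟨c, hcc⟩ : ∃ c, (Finset.univ.filter fun s => δ s = false).card = c + 1 :=
      ⟨(Finset.univ.filter fun s => δ s = false).card - 1,
        (Nat.succ_pred_eq_of_pos (Finset.card_pos.2 ⟨s₀, hmem⟩)).symm⟩
    rw [cntFalse, hset, Finset.card_erase_of_mem hmem, cntFalse, hcc]
    simp [pow_succ]

lemma alt_sum_zero {L : Type*} [AddCommGroup L] {r : ℕ} (s₀ : Fin (r + 1))
    (v : (Fin (r + 1) → Bool) → L)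
    (hv : ∀ δ, v (Function.update δ s₀ (!δ s₀)) = v δ) :
    ∑ δ : Fin (r + 1) → Bool, ((-1 : ℤ) ^ cntFalse δ) • v δ = 0 := by
  refine Finset.sum_ninvolution (fun δ => Function.update δ s₀ (!δ s₀)) ?_ ?_ ?_ ?_
  · intro δ
    rw [hv δ, cntFalse_update, neg_smul, add_neg_cancel]
  · intro δ _ heq
    have h2 : Function.update δ s₀ (!δ s₀) s₀ = δ s₀ := congrFun heq s₀
    rw [Function.update_self] at h2
    exact Bool.not_ne_self (δ s₀) h2
  · intro δ
    exact Finset.mem_univ _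
  · intro δ
    simp [Function.update_idem, Bool.not_not, Function.update_eq_self]

lemma cntFalse_allTrue {r : ℕ} : cntFalse (fun _ : Fin (r + 1) => true) = 0 := by
  simp [cntFalse]

/-- Claim 1.2: a homotopy invariant functional of degree ≤ r kills
(r+1)-fold iterated Whitehead products: if `[b₀] = 0` and
`[b] = [[…[[v₀,v₁],v₂],…,v_r]]` with `v_s ∈ π_{k_s}(X)`, `k₀ + ⋯ + k_r = n + r`
(here `k_s = ks s + 1` and `v_s = [as s]`), then `f b = f b₀`. -/
theorem homotopy_invariant_functional_kills_whitehead
    {X : Type*} [TopologicalSpace X] (x0 : X) {L : Type*} [AddCommGroup L]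
    (n r : ℕ) (f : GenLoop (Fin n) X x0 → L)
    (hinv : ∀ a b : GenLoop (Fin n) X x0, GenLoop.Homotopic a b → f a = f b)
    (hdeg : HasDegLE f r)
    (ks : Fin (r + 1) → ℕ) (as : ∀ s, GenLoop (Fin (ks s + 1)) X x0)
    (hdim : whDim r ks + 1 = n)
    (b0 b : GenLoop (Fin n) X x0)
    (hb0 : GenLoop.Homotopic b0 GenLoop.const)
    (hb : GenLoop.Homotopic b (glCast hdim (whIter r ks as))) :
    f b = f b0 := by
  classical
  -- The families: squashed spheroids and their degenerate (constant) versions.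
  obtain ⟨K, hKc, hKd, hKi⟩ := whIter_indep r ks (fun s => squashGL (as s))
    (fun s => GenLoop.const) (fun s => squashNbhd (ks s + 1))
    (fun s => squashNbhd_isOpen _)
    (fun s u hu => squashGL_eq_const (as s) hu)
    (fun s => boundary_subset_squashNbhd _)
  -- Transport the sets to the `n`-cube.
  set Kn : Fin (r + 1) → Set (Cube n) := fun s => ccast hdim ⁻¹' K s with hKn
  have hKnd : ∀ s s', s ≠ s' → ∀ u, u ∈ Kn s → u ∉ Kn s' :=
    fun s s' hss' u hu hmem => hKd s s' hss' _ hu hmem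
  -- The modified spheroids.
  set B : (Fin (r + 1) → Bool) → GenLoop (Fin n) X x0 := fun δ =>
    glCast hdim (whIter r ks (fun s => if δ s then squashGL (as s) else GenLoop.const))
    with hB
  have hBindep : ∀ (δ δ' : Fin (r + 1) → Bool) (u : Cube n),
      (∀ s, u ∈ Kn s → δ s = δ' s) → (B δ).1 u = (B δ').1 u := by
    intro δ δ' u h
    rw [hB]
    rw [glCast_apply, glCast_apply]
    exact hKi δ δ' (ccast hdim u) h
  -- The open cover.
  set Γfun : Fin (r + 1) → Set (Cube n) := fun s => {u | ∀ s', s' ≠ s → u ∉ Kn s'} with hΓfun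
  have hΓfunOpen : ∀ s, IsOpen (Γfun s) := by
    intro s
    have : Γfun s = ⋂ s', {u : Cube n | s' ≠ s → u ∉ Kn s'} := by
      ext u; simp [hΓfun]
    rw [this]
    refine isOpen_iInter_of_finite fun s' => ?_
    rcases eq_or_ne s' s with h | h
    · have : {u : Cube n | s' ≠ s → u ∉ Kn s'} = Set.univ := by
        ext u; simp [h]
      rw [this]; exact isOpen_univ
    · have : {u : Cube n | s' ≠ s → u ∉ Kn s'} = (Kn s')ᶜ := by
        ext u; simp [h]
      rw [this]
      exact ((hKc s').preimage (ccast_continuous hdim)).isOpen_compl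
  set Γ : Finset (Set (Cube n)) := Finset.image Γfun Finset.univ with hΓ
  have hΓopen : ∀ E ∈ Γ, IsOpen E := by
    intro E hE
    obtain ⟨s, _, rfl⟩ := Finset.mem_image.1 hE
    exact hΓfunOpen s
  have hΓcover : ∀ u : Cube n, ∃ E ∈ Γ, u ∈ E := by
    intro u
    by_cases hex : ∃ s, u ∈ Kn s
    · obtain ⟨s, hs⟩ := hex
      refine ⟨Γfun s, Finset.mem_image_of_mem _ (Finset.mem_univ s), ?_⟩
      intro s' hs' hmem
      exact hKnd s' s hs' u hmem hs
    · push_neg at hex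
      exact ⟨Γfun 0, Finset.mem_image_of_mem _ (Finset.mem_univ 0),
        fun s' _ hmem => hex s' hmem⟩
  obtain ⟨g, hg⟩ := hdeg Γ hΓopen hΓcover
  -- Each element of `Γ(r)` misses some `Kn s₀`.
  have hmiss : ∀ E ∈ coverUnions Γ r, ∃ s₀, ∀ u ∈ E, u ∉ Kn s₀ := by
    intro E hE
    simp only [coverUnions, Finset.pure_def, Finset.bind_def, Finset.mem_sup,
      Finset.mem_singleton,
      Finset.mem_image, Finset.mem_filter, Finset.mem_powerset] at hE
    obtain ⟨T, ⟨S, ⟨hSsub, hScard⟩, rfl⟩, rfl⟩ := hE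
    have hpick : ∀ e ∈ S, ∃ s, Γfun s = e := by
      intro e he
      obtain ⟨s, _, hs⟩ := Finset.mem_image.1 (hSsub he)
      exact ⟨s, hs⟩
    set T : Finset (Fin (r + 1)) :=
      S.attach.image (fun e => (hpick e.1 e.2).choose) with hT
    have hTcard : T.card ≤ r := le_trans (Finset.card_image_le.trans
      (le_of_eq (Finset.card_attach))) hScard
    have hex : ∃ s₀, s₀ ∉ T := by
      by_contra hc
      push_neg at hc
      have : Finset.univ ⊆ T := fun s _ => hc s
      have := Finset.card_le_card this
      rw [Finset.card_univ, Fintype.card_fin] at this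
      omega
    obtain ⟨s₀, hs₀⟩ := hex
    refine ⟨s₀, ?_⟩
    intro u hu hmem
    obtain ⟨e, heS, hue⟩ := hu
    have heS' : e ∈ S := Finset.mem_coe.1 heS
    have hsT : (hpick e heS').choose ∈ T :=
      Finset.mem_image_of_mem _ (Finset.mem_attach S ⟨e, heS'⟩)
    have hΓe : Γfun (hpick e heS').choose = e := (hpick e heS').choose_spec
    have hne : s₀ ≠ (hpick e heS').choose := fun h => hs₀ (h ▸ hsT)
    have hu' : u ∈ Γfun (hpick e heS').choose := by rw [hΓe]; exact hue
    exact hu' s₀ hne hmem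
  -- The alternating sum of `f (B δ)` vanishes.
  have hsum : ∑ δ : Fin (r + 1) → Bool, ((-1 : ℤ) ^ cntFalse δ) • f (B δ) = 0 := by
    have h1 : ∀ δ, f (B δ) = ∑ E ∈ coverUnions Γ r, g E (sphRestrict (B δ) E) :=
      fun δ => hg (B δ)
    calc ∑ δ : Fin (r + 1) → Bool, ((-1 : ℤ) ^ cntFalse δ) • f (B δ)
        = ∑ δ : Fin (r + 1) → Bool, ∑ E ∈ coverUnions Γ r,
            ((-1 : ℤ) ^ cntFalse δ) • g E (sphRestrict (B δ) E) := by
          refine Finset.sum_congr rfl fun δ _ => ?_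
          rw [h1 δ, Finset.smul_sum]
      _ = ∑ E ∈ coverUnions Γ r, ∑ δ : Fin (r + 1) → Bool,
            ((-1 : ℤ) ^ cntFalse δ) • g E (sphRestrict (B δ) E) := Finset.sum_comm
      _ = 0 := by
          refine Finset.sum_eq_zero fun E hE => ?_
          obtain ⟨s₀, hs₀⟩ := hmiss E hE
          refine alt_sum_zero s₀ (fun δ => g E (sphRestrict (B δ) E)) fun δ => ?_
          show g E (sphRestrict (B (Function.update δ s₀ (!δ s₀))) E) =
            g E (sphRestrict (B δ) E)
          have hres : sphRestrict (B (Function.update δ s₀ (!δ s₀))) E =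
              sphRestrict (B δ) E := by
            apply Subtype.ext
            apply ContinuousMap.ext
            intro y
            show (B (Function.update δ s₀ (!δ s₀))).1 y.1 = (B δ).1 y.1
            refine hBindep _ _ _ ?_
            intro s hs
            have hsne : s ≠ s₀ := fun h => hs₀ y.1 y.2 (h ▸ hs)
            exact Function.update_of_ne hsne _ _
          rw [hres]
  -- Values of `f` on the modified spheroids.
  have hBtrue : f (B fun _ => true) = f b := by
    have h1 : GenLoop.Homotopic (B fun _ => true) (glCast hdim (whIter r ks as)) :=
      glCast_homotopic hdim (whIter_homotopic r ks _ _ fun s => squashGL_homotopic (as s))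
    exact hinv _ _ (h1.trans hb.symm)
  have hBother : ∀ δ : Fin (r + 1) → Bool, δ ≠ (fun _ => true) → f (B δ) = f b0 := by
    intro δ hδ
    have hex : ∃ s₀, δ s₀ = false := by
      by_contra hc
      push_neg at hc
      refine hδ (funext fun s => ?_)
      have := hc s
      simp only [ne_eq, Bool.not_eq_false] at this
      exact this
    obtain ⟨s₀, hs₀⟩ := hex
    have hconst : (if δ s₀ then squashGL (as s₀) else GenLoop.const) =
        (GenLoop.const : GenLoop (Fin (ks s₀ + 1)) X x0) := by
      rw [hs₀]; simp
    have hnull : GenLoop.Homotopic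
        (whIter r ks fun s => if δ s then squashGL (as s) else GenLoop.const)
        GenLoop.const := by
      refine whIter_null r ks _ s₀ ?_
      rw [hconst]
    have h2 := glCast_homotopic hdim hnull
    rw [glCast_const] at h2
    exact hinv _ _ (h2.trans hb0.symm)
  -- Conclusion.
  have hzero2 : ∑ δ : Fin (r + 1) → Bool, ((-1 : ℤ) ^ cntFalse δ) • f b0 = 0 :=
    alt_sum_zero 0 (fun _ => f b0) fun _ => rfl
  have hfinal : ∑ δ : Fin (r + 1) → Bool,
      ((-1 : ℤ) ^ cntFalse δ) • (f (B δ) - f b0) = f b - f b0 := by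
    rw [Finset.sum_eq_single_of_mem (fun _ => true) (Finset.mem_univ _)]
    · rw [cntFalse_allTrue, pow_zero, one_smul, hBtrue]
    · intro δ _ hδ
      rw [hBother δ hδ, sub_self, smul_zero]
  have : f b - f b0 = 0 := by
    rw [← hfinal]
    have : ∀ δ : Fin (r + 1) → Bool,
        ((-1 : ℤ) ^ cntFalse δ) • (f (B δ) - f b0) =
        ((-1 : ℤ) ^ cntFalse δ) • f (B δ) - ((-1 : ℤ) ^ cntFalse δ) • f b0 :=
      fun δ => smul_sub _ _ _
    rw [Finset.sum_congr rfl fun δ _ => this δ, Finset.sum_sub_distrib, hsum, hzero2,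
      sub_zero]
  exact sub_eq_zero.1 this

end
end
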